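/- Let Ω ⊆ ℝ^d be a measurable set, let p : Ω → [1,2] be measurable, let τ > 0, and let f ∈ L²(Ω, ℝ^m). Then minimization and integration can be exchanged for the Moreau envelope of the modular: the infimum over g ∈ L²(Ω, ℝ^m) of ∫_Ω |g(x)|^{p(x)} dx + (1/(2τ)) ‖f − g‖_{L²}² equals ∫_Ω [ inf over w ∈ ℝ^m of (|w|^{p(x)} + |f(x) − w|²/(2τ)) ] dx (as an equality in [0,∞]). -/

import Mathlib

open MeasureTheory ENNReal

private lemma sq_norm_L2 {α E : Type*} [MeasurableSpace α] {μ : Measure α}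
    [NormedAddCommGroup E] (h : Lp E 2 μ) :
    ENNReal.ofReal (‖h‖ ^ 2) = ∫⁻ x, (‖h x‖₊ : ℝ≥0∞) ^ 2 ∂μ := by
  have h1 : eLpNorm h 2 μ = (∫⁻ x, (‖h x‖₊ : ℝ≥0∞) ^ (2:ℝ) ∂μ) ^ (1/(2:ℝ)) := by
    rw [eLpNorm_eq_lintegral_rpow_enorm_toReal two_ne_zero ENNReal.ofNat_ne_top]
    simp only [enorm_eq_nnnorm]
    norm_num
  have h2 : eLpNorm h 2 μ ≠ ∞ := Lp.eLpNorm_ne_top h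
  rw [Lp.norm_def]
  rw [← ENNReal.toReal_pow, ENNReal.ofReal_toReal (pow_ne_top h2)]
  rw [h1, ← ENNReal.rpow_natCast _ 2, ← ENNReal.rpow_mul]
  norm_num

set_option maxHeartbeats 1000000 in
/-- Exchange of minimization and integration for the Moreau envelope of the
variable-exponent modular: for `f ∈ L²(Ω, ℝ^m)` and `τ > 0`,
`inf_{g ∈ L²} (∫_Ω |g(x)|^{p(x)} dx + ‖f − g‖²/(2τ))
  = ∫_Ω inf_{w ∈ ℝ^m} (|w|^{p(x)} + |f(x) − w|²/(2τ)) dx` in `[0,∞]`. -/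
theorem moreau_envelope_modular_pointwise (d m : ℕ) (hm : 1 ≤ m)
    (Ω : Set (EuclideanSpace ℝ (Fin d))) (hΩ : MeasurableSet Ω)
    (p : EuclideanSpace ℝ (Fin d) → ℝ) (hp : Measurable p)
    (hp1 : ∀ x ∈ Ω, 1 ≤ p x) (hp2 : ∀ x ∈ Ω, p x ≤ 2)
    (τ : ℝ) (hτ : 0 < τ)
    (f : Lp (EuclideanSpace ℝ (Fin m)) 2 (volume.restrict Ω)) :
    (⨅ g : Lp (EuclideanSpace ℝ (Fin m)) 2 (volume.restrict Ω),
        (∫⁻ x in Ω, ENNReal.ofReal (‖g x‖ ^ p x))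
          + ENNReal.ofReal (‖f - g‖ ^ 2 / (2 * τ)))
      = ∫⁻ x in Ω, ENNReal.ofReal
          (⨅ w : EuclideanSpace ℝ (Fin m), (‖w‖ ^ p x + ‖f x - w‖ ^ 2 / (2 * τ))) := by
  classical
  obtain ⟨f', f'sm, hff'⟩ := Lp.aestronglyMeasurable f
  have f'meas : Measurable f' := f'sm.measurable
  set c : ℝ≥0∞ := ENNReal.ofReal (2*τ) with hc
  have h2τ : (0:ℝ) < 2*τ := by linarith
  have hc0 : c ≠ 0 := by simp [hc, h2τ, hτ]
  have hctop : c ≠ ∞ := ofReal_ne_top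
  set Φ : EuclideanSpace ℝ (Fin d) → EuclideanSpace ℝ (Fin m) → ℝ :=
    fun x w => ‖w‖ ^ p x + ‖f' x - w‖ ^ 2 / (2*τ) with hΦ
  have Φnonneg : ∀ x w, 0 ≤ Φ x w := by intro x w; positivity
  have Φmeas : ∀ w, Measurable (fun x => Φ x w) := by
    intro w
    exact (measurable_const.pow hp).add
      (((f'meas.sub measurable_const).norm.pow_const 2).div_const _)
  -- rewriting of the functional at each g
  have hterm : ∀ g : Lp (EuclideanSpace ℝ (Fin m)) 2 (volume.restrict Ω),
      (∫⁻ x in Ω, ENNReal.ofReal (‖g x‖ ^ p x))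
          + ENNReal.ofReal (‖f - g‖ ^ 2 / (2 * τ))
        = ∫⁻ x in Ω, ENNReal.ofReal (Φ x (g x)) := by
    intro g
    have hgae : AEMeasurable (fun x => (g : _ → EuclideanSpace ℝ (Fin m)) x)
        (volume.restrict Ω) := (Lp.aestronglyMeasurable g).aemeasurable
    have hA : AEMeasurable (fun x => ENNReal.ofReal (‖(g : _ → EuclideanSpace ℝ (Fin m)) x‖ ^ p x))
        (volume.restrict Ω) := by
      apply ENNReal.measurable_ofReal.comp_aemeasurable
      exact hgae.norm.pow hp.aemeasurable
    have hB : AEMeasurable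
        (fun x => ENNReal.ofReal (‖(f : _ → EuclideanSpace ℝ (Fin m)) x
          - (g : _ → EuclideanSpace ℝ (Fin m)) x‖ ^ 2)) (volume.restrict Ω) := by
      apply ENNReal.measurable_ofReal.comp_aemeasurable
      exact ((Lp.aestronglyMeasurable f).aemeasurable.sub hgae).norm.pow_const 2
    have h1 : ENNReal.ofReal (‖f - g‖ ^ 2 / (2*τ))
        = (∫⁻ x in Ω, ENNReal.ofReal (‖(f : _ → EuclideanSpace ℝ (Fin m)) x
            - (g : _ → EuclideanSpace ℝ (Fin m)) x‖ ^ 2)) * c⁻¹ := by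
      rw [ENNReal.ofReal_div_of_pos h2τ, div_eq_mul_inv, ← hc]
      congr 1
      rw [sq_norm_L2 (f - g)]
      apply lintegral_congr_ae
      filter_upwards [Lp.coeFn_sub f g] with x hx
      rw [hx]
      rw [← enorm_eq_nnnorm, ← ofReal_norm, ← ENNReal.ofReal_pow (norm_nonneg _)]
      rfl
    rw [h1, ← lintegral_mul_const'' _ hB, ← lintegral_add_left' hA]
    apply lintegral_congr_ae
    filter_upwards [hff'] with x hx
    rw [hx, hΦ]
    rw [ENNReal.ofReal_add (by positivity) (by positivity)]
    congr 1
    rw [ENNReal.ofReal_div_of_pos h2τ, div_eq_mul_inv, ← hc]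
  -- rewriting of the right-hand side integrand
  have hRHSpt : ∀ᵐ x ∂(volume.restrict Ω),
      ENNReal.ofReal (⨅ w : EuclideanSpace ℝ (Fin m),
          (‖w‖ ^ p x + ‖(f : _ → EuclideanSpace ℝ (Fin m)) x - w‖ ^ 2 / (2 * τ)))
        = ⨅ w : EuclideanSpace ℝ (Fin m), ENNReal.ofReal (Φ x w) := by
    filter_upwards [hff'] with x hx
    simp only [hx]
    exact ofReal_iInf _
  refine le_antisymm ?_ ?_
  · -- hard direction: ⨅ ≤ ∫ inf
    refine ENNReal.le_of_forall_pos_le_add fun ε hε hRfin => ?_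
    obtain ⟨δf, δpos, δmeas, δint⟩ :=
      exists_pos_lintegral_lt_of_sigmaFinite (volume.restrict Ω) (ε := ε)
        (by exact_mod_cast hε.ne')
    set D : ℕ → EuclideanSpace ℝ (Fin m) :=
      TopologicalSpace.denseSeq (EuclideanSpace ℝ (Fin m)) with hD
    set F : EuclideanSpace ℝ (Fin d) → EuclideanSpace ℝ (Fin m) → ℝ≥0∞ :=
      fun x w => ENNReal.ofReal (Φ x w) with hF
    set I : EuclideanSpace ℝ (Fin d) → ℝ≥0∞ := fun x => ⨅ n, F x (D n) with hI
    have hIfin : ∀ x, I x ≠ ∞ :=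
      fun x => ((iInf_le (fun n => F x (D n)) 0).trans_lt ofReal_lt_top).ne
    have hex : ∀ x, ∃ n, F x (D n) < I x + δf x := by
      intro x
      exact iInf_lt_iff.mp (ENNReal.lt_add_right (hIfin x)
        (by exact_mod_cast (δpos x).ne'))
    set g0 : EuclideanSpace ℝ (Fin d) → EuclideanSpace ℝ (Fin m) :=
      fun x => D (Nat.find (hex x)) with hg0
    have hFmeas : ∀ w, Measurable (fun x => F x w) :=
      fun w => ENNReal.measurable_ofReal.comp (Φmeas w)
    have hImeas : Measurable I := Measurable.iInf fun n => hFmeas (D n)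
    have hg0meas : Measurable g0 := by
      apply Measurable.find (f := fun n _ => D n) (fun n => measurable_const)
        (fun n => ?_) hex
      exact measurableSet_lt (hFmeas (D n)) (hImeas.add δmeas.coe_nnreal_ennreal)
    have hg0le : ∀ x, F x (g0 x) ≤ I x + δf x := fun x => (Nat.find_spec (hex x)).le
    have hIle : ∀ᵐ x ∂(volume.restrict Ω), I x ≤ ENNReal.ofReal
        (⨅ w : EuclideanSpace ℝ (Fin m),
          (‖w‖ ^ p x + ‖(f : _ → EuclideanSpace ℝ (Fin m)) x - w‖ ^ 2 / (2 * τ))) := by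
      filter_upwards [hRHSpt, ae_restrict_mem hΩ] with x hx hxΩ
      rw [hx]
      refine le_iInf fun w => ?_
      have hcont : ContinuousAt (fun w' => F x w') w := by
        refine ENNReal.continuous_ofReal.continuousAt.comp ?_
        apply ContinuousAt.add
        · exact (Real.continuousAt_rpow_const ‖w‖ (p x)
            (Or.inr (le_trans zero_le_one (hp1 x hxΩ)))).comp continuous_norm.continuousAt
        · exact (((continuous_const.sub continuous_id).norm.pow 2).div_const _).continuousAt
      obtain ⟨u, hu_mem, hu_tend⟩ :=
        mem_closure_iff_seq_limit.mp
          ((TopologicalSpace.denseRange_denseSeq (EuclideanSpace ℝ (Fin m))) w)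
      refine ge_of_tendsto (hcont.tendsto.comp hu_tend) ?_
      filter_upwards with k
      obtain ⟨n, hn⟩ := hu_mem k
      calc I x ≤ F x (D n) := iInf_le _ n
        _ = F x (u k) := congrArg (F x) hn
    have key : ∫⁻ x in Ω, F x (g0 x)
        ≤ (∫⁻ x in Ω, ENNReal.ofReal
            (⨅ w : EuclideanSpace ℝ (Fin m),
              (‖w‖ ^ p x + ‖(f : _ → EuclideanSpace ℝ (Fin m)) x - w‖ ^ 2 / (2 * τ)))) + ε := by
      calc ∫⁻ x in Ω, F x (g0 x) ≤ ∫⁻ x in Ω, (I x + δf x) :=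
            lintegral_mono fun x => hg0le x
        _ = (∫⁻ x in Ω, I x) + ∫⁻ x in Ω, (δf x : ℝ≥0∞) :=
            lintegral_add_left' hImeas.aemeasurable _
        _ ≤ _ := add_le_add (lintegral_mono_ae hIle) δint.le
    have hRfin' : (∫⁻ x in Ω, ENNReal.ofReal
        (⨅ w : EuclideanSpace ℝ (Fin m),
          (‖w‖ ^ p x + ‖(f : _ → EuclideanSpace ℝ (Fin m)) x - w‖ ^ 2 / (2 * τ))))
          + (ε : ℝ≥0∞) < ∞ :=
      ENNReal.add_lt_top.mpr ⟨hRfin, coe_lt_top⟩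
    have hfinto : ∫⁻ x in Ω, F x (g0 x) < ∞ := key.trans_lt hRfin'
    -- membership of g0 in L²
    have hsub : ∫⁻ x in Ω, ENNReal.ofReal (‖f' x - g0 x‖ ^ 2) < ∞ := by
      have hpt : ∀ x, ENNReal.ofReal (‖f' x - g0 x‖ ^ 2) ≤ c * F x (g0 x) := by
        intro x
        have h1 : ENNReal.ofReal (‖f' x - g0 x‖ ^ 2)
            = c * ENNReal.ofReal (‖f' x - g0 x‖ ^ 2 / (2*τ)) := by
          rw [ENNReal.ofReal_div_of_pos h2τ, ← hc,
            ENNReal.mul_div_cancel hc0 hctop]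
        rw [h1]
        refine mul_le_mul_right ?_ c
        apply ENNReal.ofReal_le_ofReal
        rw [hΦ]
        have : (0:ℝ) ≤ ‖g0 x‖ ^ p x := by positivity
        linarith
      calc ∫⁻ x in Ω, ENNReal.ofReal (‖f' x - g0 x‖ ^ 2)
          ≤ ∫⁻ x in Ω, c * F x (g0 x) := lintegral_mono hpt
        _ = c * ∫⁻ x in Ω, F x (g0 x) := by
            rw [lintegral_const_mul' _ _ hctop]
        _ < ∞ := ENNReal.mul_lt_top hctop.lt_top hfinto
    have hmem_sub : MemLp (fun x => f' x - g0 x) 2 (volume.restrict Ω) := by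
      constructor
      · exact ((f'meas.sub hg0meas).stronglyMeasurable).aestronglyMeasurable
      · rw [eLpNorm_eq_lintegral_rpow_enorm_toReal two_ne_zero ENNReal.ofNat_ne_top]
        refine ENNReal.rpow_lt_top_of_nonneg (by norm_num) ?_
        rw [← lt_top_iff_ne_top]
        have heq : ∀ y : EuclideanSpace ℝ (Fin m), (‖y‖₊ : ℝ≥0∞) ^ (2 : ℝ≥0∞).toReal
            = ENNReal.ofReal (‖y‖ ^ 2) := by
          intro y
          rw [ENNReal.toReal_ofNat, ENNReal.ofReal_pow (norm_nonneg _),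
            ofReal_norm, enorm_eq_nnnorm, show ((2:ℝ)) = ((2:ℕ):ℝ) by norm_num,
            ENNReal.rpow_natCast]
        simp only [enorm_eq_nnnorm, heq]
        exact hsub
    have hmemf' : MemLp f' 2 (volume.restrict Ω) := (Lp.memLp f).ae_eq hff'
    have hg0mem : MemLp g0 2 (volume.restrict Ω) := by
      have hrw : g0 = fun x => f' x - (f' x - g0 x) := by funext x; abel
      rw [hrw]
      exact hmemf'.sub hmem_sub
    calc (⨅ g : Lp (EuclideanSpace ℝ (Fin m)) 2 (volume.restrict Ω),
            (∫⁻ x in Ω, ENNReal.ofReal (‖g x‖ ^ p x))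
            + ENNReal.ofReal (‖f - g‖ ^ 2 / (2 * τ)))
        ≤ (∫⁻ x in Ω, ENNReal.ofReal (‖(hg0mem.toLp g0) x‖ ^ p x))
            + ENNReal.ofReal (‖f - hg0mem.toLp g0‖ ^ 2 / (2 * τ)) := iInf_le _ _
      _ = ∫⁻ x in Ω, ENNReal.ofReal (Φ x ((hg0mem.toLp g0 :
            Lp (EuclideanSpace ℝ (Fin m)) 2 (volume.restrict Ω)) x)) := hterm _
      _ = ∫⁻ x in Ω, F x (g0 x) := by
          apply lintegral_congr_ae
          filter_upwards [hg0mem.coeFn_toLp] with x hx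
          rw [hx]
      _ ≤ _ := key
  · -- easy direction
    refine le_iInf fun g => ?_
    rw [hterm g]
    refine lintegral_mono_ae ?_
    filter_upwards [hff'] with x hx
    simp only [hx]
    apply ENNReal.ofReal_le_ofReal
    refine ciInf_le ⟨0, ?_⟩ ((g : _ → EuclideanSpace ℝ (Fin m)) x)
    rintro y ⟨w, rfl⟩
    positivity
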